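/- With the notation of the cable nonlinearity (I = (0,π), s ∈ C¹, ξ₀, Ξ, L, L₀, h as above, b, c ≥ 0, and Π(u) = (b/2)(L(u)−L₀)² + c∫₀^π ξ₀(Ξ(u)−ξ₀)), there exist constants C_c = b(π + ∫₀^π|s'|) and C̄_c = c·max_{Ī}|ξ₀|·(π + ∫₀^π|s'|) + b L₀² such that for all u ∈ W^{1,1}(I): ∫₀^π h(u)(x) u'(x) dx ≤ −Π(u) + C_c ∫₀^π |u'(x)| dx + C̄_c. -/

import Mathlib

open MeasureTheory

/-- The rest arclength density `ξ₀(x) = √(1+s'(x)²)`. -/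
noncomputable def xi0 (ds : ℝ → ℝ) (x : ℝ) : ℝ := Real.sqrt (1 + (ds x) ^ 2)

/-- The arclength integrand `Ξ(u)(x) = √(1+(u'(x)+s'(x))²)`. -/
noncomputable def XiF (ds du : ℝ → ℝ) (x : ℝ) : ℝ :=
  Real.sqrt (1 + (du x + ds x) ^ 2)

/-- The length functional `L(u) = ∫₀^π Ξ(u)`. -/
noncomputable def lenF (ds du : ℝ → ℝ) : ℝ :=
  ∫ x in (0:ℝ)..Real.pi, XiF ds du x

/-- The rest length `L₀ = ∫₀^π ξ₀ = L(0)`. -/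
noncomputable def len0 (ds : ℝ → ℝ) : ℝ :=
  ∫ x in (0:ℝ)..Real.pi, xi0 ds x

/-- The cable-hanger restoring force density
`h(u) = [b(L₀ − L(u)) − cξ₀]·(u'+s')/√(1+(u'+s')²)`. -/
noncomputable def hF (b c : ℝ) (ds du : ℝ → ℝ) (x : ℝ) : ℝ :=
  (b * (len0 ds - lenF ds du) - c * xi0 ds x) * (du x + ds x) / XiF ds du x

/-- The cable potential energy
`Π(u) = (b/2)(L(u)−L₀)² + c∫₀^π ξ₀(Ξ(u)−ξ₀)`. -/
noncomputable def PiF (b c : ℝ) (ds du : ℝ → ℝ) : ℝ :=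
  b / 2 * (lenF ds du - len0 ds) ^ 2 +
    c * ∫ x in (0:ℝ)..Real.pi, xi0 ds x * (XiF ds du x - xi0 ds x)

lemma sqrt_one_le (a : ℝ) : 1 ≤ Real.sqrt (1 + a ^ 2) :=
  Real.one_le_sqrt.2 (by nlinarith [sq_nonneg a])

lemma abs_le_sqrt' (a : ℝ) : |a| ≤ Real.sqrt (1 + a ^ 2) := by
  rw [← Real.sqrt_sq_eq_abs]; exact Real.sqrt_le_sqrt (by nlinarith)

lemma lipXi (p q : ℝ) : |Real.sqrt (1+(p+q)^2) - Real.sqrt (1+q^2)| ≤ |p| := by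
  set A := Real.sqrt (1+(p+q)^2) with hA
  set B := Real.sqrt (1+q^2) with hB
  have hA2 : A^2 = 1+(p+q)^2 := Real.sq_sqrt (by positivity)
  have hB2 : B^2 = 1+q^2 := Real.sq_sqrt (by positivity)
  have hA1 : 1 ≤ A := sqrt_one_le _
  have hB1 : 1 ≤ B := sqrt_one_le _
  have haA : |p+q| ≤ A := abs_le_sqrt' _
  have haB : |q| ≤ B := abs_le_sqrt' _
  have hpos : 0 < A + B := by linarith
  have h2 : |A - B| * (A + B) = |p| * |p + 2*q| := by
    rw [← abs_of_pos hpos, ← abs_mul, ← abs_mul]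
    congr 1
    nlinarith [hA2, hB2]
  have h4 : |p + 2*q| ≤ |p+q| + |q| := by
    have := abs_add_le (p+q) q; rw [show p + 2*q = p+q+q by ring]; exact this
  have h5 : |A - B| * (A + B) ≤ |p| * (A + B) := by
    rw [h2]; exact mul_le_mul_of_nonneg_left (by linarith) (abs_nonneg p)
  exact le_of_mul_le_mul_right h5 hpos

/-- The key dissipativity estimate on the cable nonlinearity:
`(h(u), u')₀ ≤ −Π(u) + C_c‖u'‖_{L¹} + C̄_c`, with
`C_c = b(π + ∫₀^π|s'|)` and `C̄_c = c·M·(π + ∫₀^π|s'|) + bL₀²`,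
`M` being a bound on `ξ₀` over `[0,π]`. -/
theorem stmt_7 (b c : ℝ) (hb : 0 ≤ b) (hc : 0 ≤ c)
    (s ds u du : ℝ → ℝ) (M : ℝ)
    (hs : ∀ x ∈ Set.Icc (0:ℝ) Real.pi, HasDerivAt s (ds x) x)
    (hsc : ContinuousOn ds (Set.Icc (0:ℝ) Real.pi))
    (hM : ∀ x ∈ Set.Icc (0:ℝ) Real.pi, |xi0 ds x| ≤ M)
    (hu : ∀ x ∈ Set.Ioo (0:ℝ) Real.pi, HasDerivAt u (du x) x)
    (hui : IntervalIntegrable du volume 0 Real.pi) :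
    (∫ x in (0:ℝ)..Real.pi, hF b c ds du x * du x) ≤
      -PiF b c ds du +
      (b * (Real.pi + ∫ x in (0:ℝ)..Real.pi, |ds x|)) *
        (∫ x in (0:ℝ)..Real.pi, |du x|) +
      (c * M * (Real.pi + ∫ x in (0:ℝ)..Real.pi, |ds x|) + b * (len0 ds) ^ 2) := by
  have hπ : (0:ℝ) ≤ Real.pi := Real.pi_pos.le
  set X : ℝ → ℝ := XiF ds du with hXdef
  set ξ : ℝ → ℝ := xi0 ds with hξdef
  set lv : ℝ := lenF ds du with hlv
  set l0 : ℝ := len0 ds with hl0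
  -- pointwise facts
  have hX1 : ∀ x, 1 ≤ X x := fun x => sqrt_one_le _
  have hXpos : ∀ x, 0 < X x := fun x => lt_of_lt_of_le one_pos (hX1 x)
  have hξ1 : ∀ x, 1 ≤ ξ x := fun x => sqrt_one_le _
  have hXabs : ∀ x, |du x + ds x| ≤ X x := fun x => abs_le_sqrt' _
  have hlip : ∀ x, |X x - ξ x| ≤ |du x| := fun x => lipXi (du x) (ds x)
  -- measurability
  have hmdu : AEStronglyMeasurable du (volume.restrict (Set.Ioc 0 Real.pi)) :=
    hui.1.aestronglyMeasurable
  have hmds : AEStronglyMeasurable ds (volume.restrict (Set.Ioc 0 Real.pi)) :=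
    (hsc.aestronglyMeasurable measurableSet_Icc).mono_measure
      (Measure.restrict_mono Set.Ioc_subset_Icc_self le_rfl)
  have hφ : Continuous fun a : ℝ => Real.sqrt (1 + a ^ 2) := by
    exact Real.continuous_sqrt.comp (by continuity)
  have hmX : AEStronglyMeasurable X (volume.restrict (Set.Ioc 0 Real.pi)) :=
    hφ.comp_aestronglyMeasurable (hmdu.add hmds)
  have hmξ : AEStronglyMeasurable ξ (volume.restrict (Set.Ioc 0 Real.pi)) :=
    hφ.comp_aestronglyMeasurable hmds
  -- basic integrabilities
  have iadu : IntervalIntegrable (fun x => |du x|) volume 0 Real.pi := hui.abs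
  have ids : IntervalIntegrable ds volume 0 Real.pi := by
    apply ContinuousOn.intervalIntegrable
    rwa [Set.uIcc_of_le hπ]
  have iads : IntervalIntegrable (fun x => |ds x|) volume 0 Real.pi := ids.abs
  have iξ : IntervalIntegrable ξ volume 0 Real.pi := by
    apply ContinuousOn.intervalIntegrable
    rw [Set.uIcc_of_le hπ]
    exact hφ.comp_continuousOn hsc
  have iξξ : IntervalIntegrable (fun x => ξ x * ξ x) volume 0 Real.pi := by
    apply ContinuousOn.intervalIntegrable
    rw [Set.uIcc_of_le hπ]
    exact (hφ.comp_continuousOn hsc).mul (hφ.comp_continuousOn hsc)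
  have cv : ∀ f : ℝ → ℝ, IntervalIntegrable f volume 0 Real.pi ↔
      IntegrableOn f (Set.Ioc 0 Real.pi) volume :=
    fun f => intervalIntegrable_iff_integrableOn_Ioc_of_le hπ
  have iX : IntervalIntegrable X volume 0 Real.pi := by
    rw [cv]
    apply Integrable.mono ((cv _).1 (iξ.add iadu)) hmX
    filter_upwards with x
    rw [Real.norm_eq_abs, Real.norm_eq_abs, abs_of_nonneg (by linarith [hX1 x]),
      abs_of_nonneg (by linarith [hξ1 x, abs_nonneg (du x)])]
    have := abs_le.1 (hlip x)
    linarith [this.2]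
  have hM0 : 0 ≤ M := le_trans (abs_nonneg _) (hM 0 ⟨le_rfl, hπ⟩)
  -- ξ·X integrable
  have iξX : IntervalIntegrable (fun x => ξ x * X x) volume 0 Real.pi := by
    rw [cv]
    apply Integrable.mono (((cv _).1 iX).const_mul M) (hmξ.mul hmX)
    filter_upwards [ae_restrict_mem measurableSet_Ioc] with x hx
    have hx' : x ∈ Set.Icc (0:ℝ) Real.pi := Set.Ioc_subset_Icc_self hx
    show ‖ξ x * X x‖ ≤ ‖M * X x‖
    rw [Real.norm_eq_abs, Real.norm_eq_abs, abs_mul, abs_mul,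
      abs_of_nonneg (by linarith [hX1 x] : (0:ℝ) ≤ X x)]
    exact mul_le_mul_of_nonneg_right ((hM x hx').trans (le_abs_self M))
      (by linarith [hX1 x])
  -- the constant K and the remainder term f3
  set K : ℝ := b * |lv - l0| + c * M with hK
  have hK0 : 0 ≤ K := add_nonneg (mul_nonneg hb (abs_nonneg _)) (mul_nonneg hc hM0)
  set f3 : ℝ → ℝ :=
    fun x => (b * (l0 - lv) - c * ξ x) * (1 + (du x + ds x) * ds x) / X x with hf3
  have hcoef : ∀ x ∈ Set.Icc (0:ℝ) Real.pi, |b * (l0 - lv) - c * ξ x| ≤ K := by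
    intro x hx
    calc |b * (l0 - lv) - c * ξ x| ≤ |b * (l0 - lv)| + |c * ξ x| := abs_sub _ _
    _ ≤ K := by
        rw [abs_mul, abs_mul, abs_of_nonneg hb, abs_of_nonneg hc, abs_sub_comm]
        exact add_le_add le_rfl (mul_le_mul_of_nonneg_left (hM x hx) hc)
  have hf3bd : ∀ x ∈ Set.Icc (0:ℝ) Real.pi, |f3 x| ≤ K * (1 + |ds x|) := by
    intro x hx
    have hnum : |1 + (du x + ds x) * ds x| ≤ X x * (1 + |ds x|) := by
      calc |1 + (du x + ds x) * ds x| ≤ |(1:ℝ)| + |(du x + ds x) * ds x| := abs_add_le _ _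
      _ = 1 + |du x + ds x| * |ds x| := by rw [abs_one, abs_mul]
      _ ≤ X x + X x * |ds x| := by
          refine add_le_add (hX1 x) (mul_le_mul_of_nonneg_right (hXabs x) (abs_nonneg _))
      _ = X x * (1 + |ds x|) := by ring
    have h1 : |f3 x| = |b * (l0 - lv) - c * ξ x| * (|1 + (du x + ds x) * ds x| / X x) := by
      rw [hf3, abs_div, abs_mul, abs_of_pos (hXpos x), mul_div_assoc]
    rw [h1]
    have h2 : |1 + (du x + ds x) * ds x| / X x ≤ 1 + |ds x| := by
      rw [div_le_iff₀ (hXpos x)]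
      calc |1 + (du x + ds x) * ds x| ≤ X x * (1 + |ds x|) := hnum
      _ = (1 + |ds x|) * X x := by ring
    exact mul_le_mul (hcoef x hx) h2 (div_nonneg (abs_nonneg _) (hXpos x).le) hK0
  have hmf3 : AEStronglyMeasurable f3 (volume.restrict (Set.Ioc 0 Real.pi)) := by
    apply AEMeasurable.aestronglyMeasurable
    exact ((aemeasurable_const.sub (hmξ.aemeasurable.const_mul c)).mul
      (aemeasurable_const.add ((hmdu.aemeasurable.add hmds.aemeasurable).mul
        hmds.aemeasurable))).div hmX.aemeasurable
  have ibnd : IntervalIntegrable (fun x => K * (1 + |ds x|)) volume 0 Real.pi :=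
    (intervalIntegrable_const.add iads).const_mul K
  have if3 : IntervalIntegrable f3 volume 0 Real.pi := by
    rw [cv]
    apply Integrable.mono ((cv _).1 ibnd) hmf3
    filter_upwards [ae_restrict_mem measurableSet_Ioc] with x hx
    rw [Real.norm_eq_abs, Real.norm_eq_abs,
      abs_of_nonneg (mul_nonneg hK0 (by positivity))]
    exact hf3bd x (Set.Ioc_subset_Icc_self hx)
  -- integrability of hF·du
  have hgbd : ∀ x ∈ Set.Icc (0:ℝ) Real.pi, |hF b c ds du x * du x| ≤ K * |du x| := by
    intro x hx
    have h1 : |hF b c ds du x * du x|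
        = |b * (l0 - lv) - c * ξ x| * (|du x + ds x| / X x) * |du x| := by
      simp only [hF, ← hXdef, ← hξdef, ← hlv, ← hl0]
      rw [abs_mul, abs_div, abs_mul, abs_of_pos (hXpos x), mul_div_assoc]
    rw [h1]
    have h2 : |du x + ds x| / X x ≤ 1 := by
      rw [div_le_one (hXpos x)]; exact hXabs x
    refine mul_le_mul_of_nonneg_right ?_ (abs_nonneg _)
    calc |b * (l0 - lv) - c * ξ x| * (|du x + ds x| / X x)
        ≤ K * 1 := mul_le_mul (hcoef x hx) h2 (div_nonneg (abs_nonneg _) (hXpos x).le) hK0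
    _ = K := mul_one K
  -- pointwise identity
  have hid : ∀ x, hF b c ds du x * du x
      = (b * (l0 - lv)) * X x - c * (ξ x * X x) - f3 x := by
    intro x
    have hX2 : X x ^ 2 = 1 + (du x + ds x) ^ 2 := Real.sq_sqrt (by positivity)
    have hXne : X x ≠ 0 := (hXpos x).ne'
    simp only [hF, ← hXdef, ← hξdef, ← hlv, ← hl0, hf3]
    field_simp
    linear_combination (-(b * l0 - b * lv - c * ξ x)) * hX2
  set D : ℝ := ∫ x in (0:ℝ)..Real.pi, |du x| with hDdef
  set S : ℝ := ∫ x in (0:ℝ)..Real.pi, |ds x| with hSdef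
  have hD0 : 0 ≤ D := intervalIntegral.integral_nonneg hπ (fun x _ => abs_nonneg _)
  have hS0 : 0 ≤ S := intervalIntegral.integral_nonneg hπ (fun x _ => abs_nonneg _)
  have hXint : (∫ x in (0:ℝ)..Real.pi, X x) = lv := by rw [hlv, hXdef]; rfl
  have hξint : (∫ x in (0:ℝ)..Real.pi, ξ x) = l0 := by rw [hl0, hξdef]; rfl
  -- integrability of the full integrand
  have ig : IntervalIntegrable (fun x => hF b c ds du x * du x) volume 0 Real.pi := by
    have : (fun x => hF b c ds du x * du x)
        = fun x => (b * (l0 - lv)) * X x - c * (ξ x * X x) - f3 x := funext hid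
    rw [this]
    exact ((iX.const_mul _).sub (iξX.const_mul _)).sub if3
  -- splitting of the integral
  have hsplit : (∫ x in (0:ℝ)..Real.pi, hF b c ds du x * du x)
      = (b * (l0 - lv)) * (∫ x in (0:ℝ)..Real.pi, X x)
        - c * (∫ x in (0:ℝ)..Real.pi, ξ x * X x)
        - ∫ x in (0:ℝ)..Real.pi, f3 x := by
    rw [← intervalIntegral.integral_const_mul, ← intervalIntegral.integral_const_mul,
      ← intervalIntegral.integral_sub (iX.const_mul _) (iξX.const_mul _),
      ← intervalIntegral.integral_sub ((iX.const_mul _).sub (iξX.const_mul _)) if3]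
    exact intervalIntegral.integral_congr fun x _ => hid x
  set Q : ℝ := ∫ x in (0:ℝ)..Real.pi, ξ x * (X x - ξ x) with hQdef
  set R : ℝ := ∫ x in (0:ℝ)..Real.pi, ξ x * ξ x with hRdef
  have hR0 : 0 ≤ R :=
    intervalIntegral.integral_nonneg hπ fun x _ =>
      mul_nonneg (by linarith [hξ1 x]) (by linarith [hξ1 x])
  have hQX : (∫ x in (0:ℝ)..Real.pi, ξ x * X x) = Q + R := by
    rw [hQdef]
    simp only [mul_sub]
    rw [intervalIntegral.integral_sub iξX iξξ, hRdef]
    ring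
  have hLD : |lv - l0| ≤ D := by
    have h1 : lv - l0 = ∫ x in (0:ℝ)..Real.pi, (X x - ξ x) := by
      rw [intervalIntegral.integral_sub iX iξ, hXint, hξint]
    rw [h1, ← Real.norm_eq_abs]
    refine le_trans (intervalIntegral.norm_integral_le_abs_of_norm_le ?_ iadu) ?_
    · exact Filter.Eventually.of_forall fun t => by rw [Real.norm_eq_abs]; exact hlip t
    · rw [abs_of_nonneg hD0]
  have hE : |∫ x in (0:ℝ)..Real.pi, f3 x| ≤ K * (Real.pi + S) := by
    have h2 : ∀ᵐ t ∂volume.restrict (Set.uIoc 0 Real.pi), ‖f3 t‖ ≤ K * (1 + |ds t|) := by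
      rw [Set.uIoc_of_le hπ]
      filter_upwards [ae_restrict_mem measurableSet_Ioc] with t ht
      rw [Real.norm_eq_abs]
      exact hf3bd t (Set.Ioc_subset_Icc_self ht)
    have h3 := intervalIntegral.norm_integral_le_abs_of_norm_le h2 ibnd
    rw [Real.norm_eq_abs] at h3
    refine h3.trans ?_
    have h4 : (∫ x in (0:ℝ)..Real.pi, K * (1 + |ds x|)) = K * (Real.pi + S) := by
      rw [intervalIntegral.integral_const_mul,
        intervalIntegral.integral_add intervalIntegrable_const iads,
        intervalIntegral.integral_const]
      rw [hSdef]
      simp [smul_eq_mul]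
    rw [h4, abs_of_nonneg (mul_nonneg hK0 (by linarith))]
  -- final assembly
  have hPiF : PiF b c ds du = b / 2 * (lv - l0) ^ 2 + c * Q := by
    rw [hQdef, hlv, hl0, hξdef, hXdef]; rfl
  rw [hsplit, hXint, hPiF, hQX]
  have hneg : -(∫ x in (0:ℝ)..Real.pi, f3 x) ≤ K * (Real.pi + S) :=
    le_trans (neg_le_abs _) hE
  have hKb : K * (Real.pi + S) ≤ (b * D + c * M) * (Real.pi + S) := by
    refine mul_le_mul_of_nonneg_right ?_ (by linarith)
    rw [hK]
    exact add_le_add (mul_le_mul_of_nonneg_left hLD hb) le_rfl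
  have hKb2 : (b * D + c * M) * (Real.pi + S)
      = (b * (Real.pi + S)) * D + c * M * (Real.pi + S) := by ring
  have hquad : b * (l0 - lv) * lv ≤ -(b / 2 * (lv - l0) ^ 2) + b * l0 ^ 2 := by
    nlinarith [mul_nonneg hb (sq_nonneg lv), mul_nonneg hb (sq_nonneg l0)]
  have hcR : 0 ≤ c * R := mul_nonneg hc hR0
  have hcsplit : c * (Q + R) = c * Q + c * R := by ring
  linarith [hneg, hKb, hKb2, hquad, hcR, hcsplit]
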